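/- Let A be a set, let n, m, k be natural numbers with 0 < m ≤ n and 0 < k, and suppose k divides both m and n. If A has an n-ary exact-m-majority operation, then A has an (n/k)-ary exact-(m/k)-majority operation; explicitly, if u is an n-ary exact-m-majority operation, then the operation t : (Fin (n/k) → A) → A defined by t(y) = u(x), where x assigns to the i-th coordinate the value y(⌊i/k⌋) (so that each argument of t is repeated k times among the arguments of u), is an exact-(m/k)-majority operation. -/

import Mathlib

/-- An `n`-ary operation `u` on `A` is an exact-`m`-majority operation if it is
idempotent and returns `a` whenever every argument equals `a` or `b` and exactly
`m` arguments equal `a`. -/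
def IsExactMajorityOp {A : Type*} (n m : ℕ) (u : (Fin n → A) → A) : Prop :=
  (∀ a : A, u (fun _ => a) = a) ∧
  ∀ (a b : A) (x : Fin n → A), (∀ i, x i = a ∨ x i = b) →
    {i : Fin n | x i = a}.ncard = m → u x = a

lemma fiber_card (n k : ℕ) (hk : 0 < k) (hkn : k ∣ n) (j : Fin (n / k)) :
    (Finset.univ.filter (fun i : Fin n => (i : ℕ) / k = (j : ℕ))).card = k := by
  classical
  have hjk : (j : ℕ) * k + k ≤ n := by
    have h : ((j : ℕ) + 1) * k ≤ (n / k) * k := Nat.mul_le_mul_right k j.isLt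
    rw [Nat.div_mul_cancel hkn] at h
    linarith [h]
  have key : (Finset.univ.filter (fun i : Fin n => (i : ℕ) / k = (j : ℕ))).card
      = (Finset.univ : Finset (Fin k)).card := by
    apply Finset.card_nbij'
      (fun i : Fin n => (⟨((i : ℕ) - (j : ℕ) * k) % k, Nat.mod_lt _ hk⟩ : Fin k))
      (fun t : Fin k => (⟨(j : ℕ) * k + (t : ℕ), by have := t.isLt; omega⟩ : Fin n))
    · intro i _; exact Finset.mem_univ _
    · intro t _
      simp only [Finset.mem_coe, Finset.mem_filter, Finset.mem_univ, true_and]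
      have htk := t.isLt
      show ((j : ℕ) * k + (t : ℕ)) / k = (j : ℕ)
      rw [mul_comm, Nat.mul_add_div hk, Nat.div_eq_of_lt htk, add_zero]
    · intro i hi
      simp only [Finset.mem_coe, Finset.mem_filter, Finset.mem_univ, true_and] at hi
      have hdm := Nat.div_add_mod (i : ℕ) k
      have hml : (i : ℕ) % k < k := Nat.mod_lt _ hk
      rw [hi, mul_comm] at hdm
      have hsub : (i : ℕ) - (j : ℕ) * k = (i : ℕ) % k := by omega
      ext
      show (j : ℕ) * k + ((i : ℕ) - (j : ℕ) * k) % k = (i : ℕ)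
      rw [hsub, Nat.mod_eq_of_lt hml]
      omega
    · intro t _
      have htk := t.isLt
      ext
      show ((j : ℕ) * k + (t : ℕ) - (j : ℕ) * k) % k = (t : ℕ)
      rw [Nat.add_sub_cancel_left, Nat.mod_eq_of_lt htk]
  rw [key]; simp

theorem stmt2 {A : Type*} (n m k : ℕ) (hm : 0 < m) (hmn : m ≤ n) (hk : 0 < k)
    (hkm : k ∣ m) (hkn : k ∣ n)
    (u : (Fin n → A) → A) (hu : IsExactMajorityOp n m u) :
    IsExactMajorityOp (n / k) (m / k)
      (fun y => u (fun i => y ⟨(i : ℕ) / k, Nat.div_lt_div_of_lt_of_dvd hkn i.isLt⟩)) := by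
  classical
  constructor
  · intro a; exact hu.1 a
  · intro a b y hy hcard
    set f : Fin n → Fin (n / k) :=
      fun i => ⟨(i : ℕ) / k, Nat.div_lt_div_of_lt_of_dvd hkn i.isLt⟩ with hf
    apply hu.2 a b _ (fun i => hy (f i))
    have hcard' : (Finset.univ.filter (fun j : Fin (n / k) => y j = a)).card = m / k := by
      rw [← hcard]
      rw [Set.ncard_eq_toFinset_card']
      congr 1
      ext j
      simp
    rw [Set.ncard_eq_toFinset_card']
    have : (Finset.univ.filter (fun i : Fin n => y (f i) = a)).card = m := by
      rw [Finset.card_eq_sum_card_fiberwise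
        (f := f) (t := Finset.univ.filter (fun j : Fin (n / k) => y j = a))
        (by intro i hi; simp only [Finset.mem_coe, Finset.mem_filter, Finset.mem_univ, true_and] at hi ⊢; exact hi)]
      have heach : ∀ j ∈ Finset.univ.filter (fun j : Fin (n / k) => y j = a),
          ((Finset.univ.filter (fun i : Fin n => y (f i) = a)).filter (fun i => f i = j)).card
            = k := by
        intro j hj
        simp only [Finset.mem_filter, Finset.mem_univ, true_and] at hj
        rw [Finset.filter_filter]
        have : (Finset.univ.filter (fun i : Fin n => y (f i) = a ∧ f i = j))
            = Finset.univ.filter (fun i : Fin n => (i : ℕ) / k = (j : ℕ)) := by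
          ext i
          simp only [Finset.mem_filter, Finset.mem_univ, true_and]
          constructor
          · intro ⟨_, h⟩; rw [← h]
          · intro h
            have hfi : f i = j := by ext; exact h
            exact ⟨by rw [hfi, hj], hfi⟩
        rw [this, fiber_card n k hk hkn j]
      rw [Finset.sum_congr rfl heach, Finset.sum_const, hcard', smul_eq_mul,
        Nat.div_mul_cancel hkm]
    rw [← this]
    congr 1
    ext i
    simp [hf]
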